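/- Let R be a Cohen-Macaulay Noetherian ring with exactly one minimal prime ideal p. If the localization R_p is reduced, then R is reduced. -/

import Mathlib

/-!
STATEMENT 0: Let `R` be a Cohen-Macaulay Noetherian ring with exactly one minimal
prime ideal `p`. If the localization `R_p` is reduced, then `R` is reduced.

Cohen-Macaulay is defined here: for every prime `p`, the depth of the local ring
`R_p` (the supremum of lengths of regular sequences contained in the maximal ideal)
equals its Krull dimension.
-/

/-- The depth of a local ring: the supremum of the lengths of regular sequences
consisting of elements of the maximal ideal. -/
noncomputable def localRingDepth (R : Type*) [CommRing R] [IsLocalRing R] : ℕ∞ :=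
  sSup {n : ℕ∞ | ∃ rs : List R, (rs.length : ℕ∞) = n ∧
    RingTheory.Sequence.IsRegular R rs ∧ ∀ x ∈ rs, x ∈ IsLocalRing.maximalIdeal R}

/-- A commutative ring is Cohen-Macaulay if for every prime ideal `p` the depth of
the localization `R_p` equals its Krull dimension. -/
def IsCohenMacaulayRing (R : Type*) [CommRing R] : Prop :=
  ∀ p : Ideal R, (hp : p.IsPrime) →
    haveI := hp
    (localRingDepth (Localization.AtPrime p) : WithBot ℕ∞) =
      ringKrullDim (Localization.AtPrime p)

open RingTheory.Sequence IsLocalRing in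
lemma localRingDepth_eq_zero_aux {A : Type*} [CommRing A] [Nontrivial A] [IsLocalRing A]
    (z : A) (hz : z ≠ 0) (hkill : ∀ r ∈ maximalIdeal A, r * z = 0) :
    localRingDepth A = 0 := by
  have hset : {n : ℕ∞ | ∃ rs : List A, (rs.length : ℕ∞) = n ∧
      RingTheory.Sequence.IsRegular A rs ∧ ∀ x ∈ rs, x ∈ maximalIdeal A} = {0} := by
    ext n
    simp only [Set.mem_setOf_eq, Set.mem_singleton_iff]
    constructor
    · rintro ⟨rs, hlen, hreg, hmem⟩
      cases rs with
      | nil => simpa using hlen.symm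
      | cons r tl =>
        exfalso
        have hr : IsSMulRegular A r :=
          ((RingTheory.Sequence.isRegular_cons_iff A r tl).mp hreg).1
        have h0 : r • z = r • (0 : A) := by
          simpa [smul_eq_mul] using hkill r (hmem r List.mem_cons_self)
        exact hz (hr h0)
    · rintro rfl
      exact ⟨[], by simp, RingTheory.Sequence.IsRegular.nil A A, by simp⟩
  rw [localRingDepth, hset, csSup_singleton]


open IsLocalRing

/-- A Cohen-Macaulay Noetherian ring with a unique minimal prime `p` such that the
localization `R_p` is reduced is itself reduced. -/
theorem stmt0 {R : Type*} [CommRing R] [IsNoetherianRing R]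
    (hCM : IsCohenMacaulayRing R)
    (p : Ideal R) [p.IsPrime]
    (huniq : minimalPrimes R = {p})
    (hred : IsReduced (Localization.AtPrime p)) :
    IsReduced R := by
  constructor
  intro x hx
  by_contra hne
  have h0 : algebraMap R (Localization.AtPrime p) x = 0 :=
    (hx.map (algebraMap R (Localization.AtPrime p))).eq_zero
  obtain ⟨s, hs⟩ := (IsLocalization.map_eq_zero_iff p.primeCompl
    (Localization.AtPrime p) x).mp h0
  have hsZD : (s : R) ∈ {r : R | ∃ y : R, y ≠ 0 ∧ r • y = 0} :=
    ⟨x, hne, by simpa [smul_eq_mul] using hs⟩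
  have hsZD' : (s : R) ∈ ⋃ q ∈ associatedPrimes R R, (q : Set R) := by
    rw [biUnion_associatedPrimes_eq_zero_divisors (R := R) (M := R)]; exact hsZD
  obtain ⟨q, hqass, hsq⟩ := Set.mem_iUnion₂.mp hsZD'
  haveI hqprime : q.IsPrime := hqass.isPrime
  obtain ⟨z, hzann⟩ := (isAssociatedPrime_iff.mp hqass).2
  rw [Submodule.bot_colon'] at hzann
  set A := Localization.AtPrime q with hA
  have hCMq := hCM q hqprime
  have hz1 : algebraMap R A z ≠ 0 := by
    intro h
    obtain ⟨u, hu⟩ := (IsLocalization.map_eq_zero_iff q.primeCompl A z).mp h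
    have hm : (u : R) ∈ (Submodule.span R {z}).annihilator := by
      rw [Submodule.mem_annihilator_span_singleton]
      simpa [smul_eq_mul] using hu
    exact u.2 (hzann.symm ▸ hm)
  have hkill : ∀ r ∈ maximalIdeal A, r * algebraMap R A z = 0 := by
    intro r hr
    obtain ⟨⟨a, u⟩, hsur⟩ := IsLocalization.surj q.primeCompl r
    have haq : a ∈ q := by
      by_contra haq
      have h1 : IsUnit (algebraMap R A a) :=
        (IsLocalization.AtPrime.isUnit_to_map_iff A q a).mpr haq
      rw [← hsur] at h1
      exact hr (isUnit_of_mul_isUnit_left h1)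
    have haz : a * z = 0 := by
      have h2 : a ∈ (Submodule.span R {z}).annihilator := hzann ▸ haq
      rw [Submodule.mem_annihilator_span_singleton] at h2
      simpa [smul_eq_mul] using h2
    have huunit : IsUnit (algebraMap R A (u : R)) := IsLocalization.map_units A u
    have h3 : r * algebraMap R A z * algebraMap R A (u : R) = 0 := by
      calc r * algebraMap R A z * algebraMap R A (u : R)
          = r * algebraMap R A (u : R) * algebraMap R A z := by ring
        _ = algebraMap R A a * algebraMap R A z := by rw [hsur]
        _ = algebraMap R A (a * z) := by rw [map_mul]
        _ = 0 := by rw [haz, map_zero]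
    exact (huunit.mul_left_eq_zero).mp h3
  haveI : Nontrivial A := ⟨algebraMap R A z, 0, hz1⟩
  have hdepth : localRingDepth A = 0 := localRingDepth_eq_zero_aux _ hz1 hkill
  have hdim : ringKrullDim A = 0 := by
    rw [← hCMq, hdepth]; rfl
  have hpq : p ≤ q := by
    obtain ⟨m, hm, hmq⟩ := Ideal.exists_minimalPrimes_le (bot_le : (⊥ : Ideal R) ≤ q)
    have hmp : m = p := by
      have h4 : m ∈ minimalPrimes R := hm
      rw [huniq] at h4; exact h4
    rwa [← hmp]
  have hqp : q = p := by
    by_contra hqp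
    have hlt : p < q := lt_of_le_of_ne hpq (Ne.symm hqp)
    let e := (IsLocalization.AtPrime.orderIsoOfPrime A q).symm
    let a := e ⟨p, ‹p.IsPrime›, hpq⟩
    let b := e ⟨q, hqprime, le_rfl⟩
    have hab : a < b := e.strictMono (by exact hlt)
    let a' : PrimeSpectrum A := ⟨a.1, a.2⟩
    let b' : PrimeSpectrum A := ⟨b.1, b.2⟩
    have hab' : a' < b' := hab
    have h5 := Order.LTSeries.length_le_krullDim (((RelSeries.singleton _ a').snoc b' hab' : LTSeries (PrimeSpectrum A)))
    rw [show Order.krullDim (PrimeSpectrum A) = ringKrullDim A from rfl, hdim] at h5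
    exact absurd h5 (by norm_num [RelSeries.snoc, RelSeries.append])
  exact s.2 (hqp ▸ hsq)
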